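/- Let G be a graph, e = ab an edge with deg(a) + deg(b) ≤ k, and c an acyclic edge coloring of G − e using k + 1 colors such that F_a ∩ F_b = ∅ (no color appears both on an edge at a and an edge at b). Then c extends to an acyclic edge coloring of G with k + 1 colors; in fact every candidate color for e is valid. -/

import Mathlib

open SimpleGraph

/-- Property A: every induced subgraph `H` satisfies `|E(H)| ≤ 2|V(H)| - 1`. -/
def PropertyA {V : Type*} (G : SimpleGraph V) : Prop :=
  ∀ s : Set V, (G.induce s).edgeSet.ncard ≤ 2 * s.ncard - 1

/-- `H` is a minor of `G`: branch sets are disjoint, connected, and adjacency is represented. -/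
def IsMinor {W V : Type*} (H : SimpleGraph W) (G : SimpleGraph V) : Prop :=
  ∃ f : W → Set V,
    (∀ w, (G.induce (f w)).Connected) ∧
    (∀ w₁ w₂, w₁ ≠ w₂ → Disjoint (f w₁) (f w₂)) ∧
    (∀ w₁ w₂, H.Adj w₁ w₂ → ∃ a ∈ f w₁, ∃ b ∈ f w₂, G.Adj a b)

/-- Planarity via Wagner's theorem: no `K₅` minor and no `K₃,₃` minor. -/
def IsPlanar {V : Type*} (G : SimpleGraph V) : Prop :=
  ¬ IsMinor (completeGraph (Fin 5)) G ∧
  ¬ IsMinor (completeBipartiteGraph (Fin 3) (Fin 3)) G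

/-- A proper edge coloring: distinct edges sharing a vertex get distinct colors. -/
def IsProperEdgeColoring {V β : Type*} (G : SimpleGraph V) (c : Sym2 V → β) : Prop :=
  ∀ e ∈ G.edgeSet, ∀ f ∈ G.edgeSet, e ≠ f → (∃ v, v ∈ e ∧ v ∈ f) → c e ≠ c f

/-- An acyclic edge coloring: proper and no cycle uses only two colors. -/
def IsAcyclicEdgeColoring {V β : Type*} (G : SimpleGraph V) (c : Sym2 V → β) : Prop :=
  IsProperEdgeColoring G c ∧
    ∀ (γ δ : β) (v : V) (p : G.Walk v v), p.IsCycle →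
      ¬ ∀ e ∈ p.edges, c e = γ ∨ c e = δ

/-- `G` admits an acyclic edge coloring with at most `k` colors. -/
def AcyclicallyEdgeColorable {V : Type*} (G : SimpleGraph V) (k : ℕ) : Prop :=
  ∃ c : Sym2 V → Fin k, IsAcyclicEdgeColoring G c

/-- A proper partial edge coloring (uncolored edges get `none`). -/
def IsProperPartialEdgeColoring {V : Type*} (G : SimpleGraph V) (c : Sym2 V → Option ℕ) : Prop :=
  ∀ e ∈ G.edgeSet, ∀ f ∈ G.edgeSet, e ≠ f → (∃ v, v ∈ e ∧ v ∈ f) →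
    ∀ γ : ℕ, c e = some γ → c f ≠ some γ

/-- There is a cycle all of whose edges are colored with one of two colors. -/
def HasBichromaticCycle {V : Type*} (G : SimpleGraph V) (c : Sym2 V → Option ℕ) : Prop :=
  ∃ (γ δ : ℕ) (v : V) (p : G.Walk v v), p.IsCycle ∧
    ∀ e ∈ p.edges, c e = some γ ∨ c e = some δ

/-- A valid (acyclic proper) partial edge coloring. -/
def IsAcyclicPartialEdgeColoring {V : Type*} (G : SimpleGraph V) (c : Sym2 V → Option ℕ) : Prop :=
  IsProperPartialEdgeColoring G c ∧ ¬ HasBichromaticCycle G c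

/-- `F_a`: the set of colors appearing on edges incident to `a`. -/
def colorsAt {V : Type*} (G : SimpleGraph V) (c : Sym2 V → Option ℕ) (a : V) : Set ℕ :=
  {γ | ∃ z, G.Adj a z ∧ c s(a, z) = some γ}

/-- `S_{ab} = F_b \ {c(a,b)}`. -/
def Sset {V : Type*} (G : SimpleGraph V) (c : Sym2 V → Option ℕ) (a b : V) : Set ℕ :=
  colorsAt G c b \ {γ | c s(a, b) = some γ}

/-- A maximal `(γ,δ)`-bichromatic path: a path all of whose edges are colored `γ` or `δ`,
which cannot be extended at either end by a `γ`- or `δ`-colored edge. -/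
def IsMaxBichromaticPath {V : Type*} (G : SimpleGraph V) (c : Sym2 V → Option ℕ)
    (γ δ : ℕ) {x y : V} (p : G.Walk x y) : Prop :=
  p.IsPath ∧ (∀ e ∈ p.edges, c e = some γ ∨ c e = some δ) ∧
    ∀ e ∈ G.edgeSet, (x ∈ e ∨ y ∈ e) → (c e = some γ ∨ c e = some δ) → e ∈ p.edges

/-- A `(γ,δ,ab)`-critical path: a maximal `(γ,δ)`-bichromatic path from `a` to `b`
whose first and last edges are colored `γ`. -/
def IsCriticalPath {V : Type*} (G : SimpleGraph V) (c : Sym2 V → Option ℕ)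
    (γ δ : ℕ) (a b : V) (p : G.Walk a b) : Prop :=
  IsMaxBichromaticPath G c γ δ p ∧
    (∃ e, p.edges.head? = some e ∧ c e = some γ) ∧
    (∃ e, p.edges.getLast? = some e ∧ c e = some γ)


/-- In a cycle, a vertex on the cycle is in two distinct edges of the cycle. -/
lemma cycle_two_edges {V : Type*} [DecidableEq V] {G : SimpleGraph V} {v a : V} {p : G.Walk v v}
    (hp : p.IsCycle) (ha : a ∈ p.support) :
    ∃ e₁ ∈ p.edges, ∃ e₂ ∈ p.edges, e₁ ≠ e₂ ∧ a ∈ e₁ ∧ a ∈ e₂ := by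
  have hq : (p.rotate a ha).IsCycle := hp.rotate ha
  have hperm := (p.rotate_edges a ha).perm
  suffices h : ∃ e₁ ∈ (p.rotate a ha).edges, ∃ e₂ ∈ (p.rotate a ha).edges,
      e₁ ≠ e₂ ∧ a ∈ e₁ ∧ a ∈ e₂ by
    obtain ⟨e₁, h1, e₂, h2, hne, m1, m2⟩ := h
    exact ⟨e₁, hperm.mem_iff.mp h1, e₂, hperm.mem_iff.mp h2, hne, m1, m2⟩
  set q := p.rotate a ha with hqdef
  clear_value q
  have hlen : 3 ≤ q.length := hq.three_le_length
  cases q with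
  | nil => simp at hlen
  | cons hadj q' =>
    rename_i b'
    have hq'len : 1 ≤ q'.length := by
      simp [SimpleGraph.Walk.length_cons] at hlen; omega
    have hdne : q'.darts ≠ [] := by
      intro h
      have := q'.length_darts
      rw [h] at this; simp at this; omega
    set d := q'.darts.getLast hdne with hd
    have hdsnd : d.snd = a := by rw [hd, SimpleGraph.Walk.getLast_darts_eq_lastDart]; rfl
    have hdmem : d ∈ q'.darts := List.getLast_mem hdne
    have he2 : d.edge ∈ q'.edges := List.mem_map_of_mem hdmem
    have hnodup : (SimpleGraph.Walk.cons hadj q').edges.Nodup := hq.isTrail.edges_nodup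
    rw [SimpleGraph.Walk.edges_cons, List.nodup_cons] at hnodup
    refine ⟨s(a, b'), by simp, d.edge, by simp [he2], ?_, by simp, ?_⟩
    · intro h; rw [← h] at he2; exact hnodup.1 he2
    · rw [← hdsnd]; exact Sym2.mem_mk_right _ _

/-- if `deg a + deg b ≤ k`, `c` is an acyclic coloring of `G - ab` with
`k + 1` colors and `F_a ∩ F_b = ∅`, then every candidate color for `ab` is valid;
in particular `c` extends to an acyclic edge coloring of all of `G`. -/
theorem extend_coloring_of_disjoint {V : Type*} [Fintype V] [DecidableEq V]
    (G : SimpleGraph V) [DecidableRel G.Adj] (k : ℕ)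
    (a b : V) (hab : G.Adj a b) (hdeg : G.degree a + G.degree b ≤ k)
    (c : Sym2 V → Option ℕ)
    (hrange : ∀ e γ, c e = some γ → γ < k + 1)
    (hun : c s(a, b) = none)
    (htot : ∀ e ∈ G.edgeSet, e ≠ s(a, b) → c e ≠ none)
    (hc : IsAcyclicPartialEdgeColoring G c)
    (hF : colorsAt G c a ∩ colorsAt G c b = ∅) :
    (∀ β, β < k + 1 → β ∉ colorsAt G c a ∪ colorsAt G c b →
      IsAcyclicPartialEdgeColoring G (Function.update c s(a, b) (some β))) ∧
    (∃ β, β < k + 1 ∧ β ∉ colorsAt G c a ∪ colorsAt G c b ∧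
      IsAcyclicPartialEdgeColoring G (Function.update c s(a, b) (some β)) ∧
      ∀ e ∈ G.edgeSet, Function.update c s(a, b) (some β) e ≠ none) := by
  have hmemcol : ∀ (x : V) (f : Sym2 V), f ∈ G.edgeSet → x ∈ f → ∀ γ : ℕ,
      c f = some γ → γ ∈ colorsAt G c x := by
    intro x f hf hxf γ hcf
    obtain ⟨z, rfl⟩ := Sym2.mem_iff_exists.mp hxf
    exact ⟨z, G.mem_edgeSet.mp hf, hcf⟩
  -- part 1
  have part1 : ∀ β, β < k + 1 → β ∉ colorsAt G c a ∪ colorsAt G c b →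
      IsAcyclicPartialEdgeColoring G (Function.update c s(a, b) (some β)) := by
    intro β _ hβ
    set c' := Function.update c s(a, b) (some β) with hc'
    -- edges touching a or b, other than ab, are not colored β
    have hcol : ∀ f ∈ G.edgeSet, f ≠ s(a, b) → (a ∈ f ∨ b ∈ f) → c' f ≠ some β := by
      intro f hf hfne hor hcf
      rw [hc', Function.update_of_ne hfne] at hcf
      rcases hor with h | h
      · exact hβ (Or.inl (hmemcol a f hf h β hcf))
      · exact hβ (Or.inr (hmemcol b f hf h β hcf))
    have hc'ab : c' s(a, b) = some β := Function.update_self _ _ _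
    have hc'ne : ∀ f, f ≠ s(a, b) → c' f = c f := fun f hf => Function.update_of_ne hf _ _
    constructor
    · -- properness
      intro e he f hf hne hshare γ hce hcf
      by_cases hea : e = s(a, b)
      · subst hea
        rw [hc'ab] at hce
        obtain ⟨v, hv1, hv2⟩ := hshare
        have hfne : f ≠ s(a, b) := fun h => hne h.symm
        have : a ∈ f ∨ b ∈ f := by
          rw [Sym2.mem_iff] at hv1; rcases hv1 with rfl | rfl
          · exact Or.inl hv2
          · exact Or.inr hv2
        exact hcol f hf hfne this (by rw [hcf, ← Option.some_inj.mp hce])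
      · by_cases hfa : f = s(a, b)
        · subst hfa
          rw [hc'ab] at hcf
          obtain ⟨v, hv1, hv2⟩ := hshare
          have : a ∈ e ∨ b ∈ e := by
            rw [Sym2.mem_iff] at hv2; rcases hv2 with rfl | rfl
            · exact Or.inl hv1
            · exact Or.inr hv1
          exact hcol e he hea this (by rw [hce, Option.some_inj.mp hcf])
        · rw [hc'ne e hea] at hce
          rw [hc'ne f hfa] at hcf
          exact hc.1 e he f hf hne hshare γ hce hcf
    · -- acyclicity
      rintro ⟨γ, δ, v, p, hcyc, hall⟩
      by_cases hmem : s(a, b) ∈ p.edges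
      · -- s(a,b) on the cycle
        have hβγδ : some β = some γ ∨ some β = some δ := by
          have := hall s(a, b) hmem
          rwa [hc'ab] at this
        have hasup : a ∈ p.support := p.fst_mem_support_of_mem_edges hmem
        have hbsup : b ∈ p.support := p.snd_mem_support_of_mem_edges hmem
        -- get another edge of the cycle at a, and another at b
        have hedge : ∀ x : V, x ∈ p.support →
            ∃ f ∈ p.edges, f ≠ s(a, b) ∧ x ∈ f := by
          intro x hx
          obtain ⟨e₁, h1, e₂, h2, hne, m1, m2⟩ := cycle_two_edges hcyc hx
          by_cases h : e₁ = s(a, b)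
          · exact ⟨e₂, h2, by rw [← h]; exact fun hh => hne hh.symm, m2⟩
          · exact ⟨e₁, h1, h, m1⟩
        obtain ⟨ea, hea1, hea2, hea3⟩ := hedge a hasup
        obtain ⟨eb, heb1, heb2, heb3⟩ := hedge b hbsup
        have heaE : ea ∈ G.edgeSet := p.edges_subset_edgeSet hea1
        have hebE : eb ∈ G.edgeSet := p.edges_subset_edgeSet heb1
        have hca : c' ea ≠ some β := hcol ea heaE hea2 (Or.inl hea3)
        have hcb : c' eb ≠ some β := hcol eb hebE heb2 (Or.inr heb3)
        -- ea, eb both colored the "other" color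
        have key : ∃ ε : ℕ, c ea = some ε ∧ c eb = some ε := by
          rcases hβγδ with hβγ | hβδ
          · refine ⟨δ, ?_, ?_⟩
            · rcases hall ea hea1 with h | h
              · exact absurd (h.trans hβγ.symm) hca
              · rwa [hc'ne ea hea2] at h
            · rcases hall eb heb1 with h | h
              · exact absurd (h.trans hβγ.symm) hcb
              · rwa [hc'ne eb heb2] at h
          · refine ⟨γ, ?_, ?_⟩
            · rcases hall ea hea1 with h | h
              · rwa [hc'ne ea hea2] at h
              · exact absurd (h.trans hβδ.symm) hca
            · rcases hall eb heb1 with h | h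
              · rwa [hc'ne eb heb2] at h
              · exact absurd (h.trans hβδ.symm) hcb
        obtain ⟨ε, hε1, hε2⟩ := key
        have : ε ∈ colorsAt G c a ∩ colorsAt G c b :=
          ⟨hmemcol a ea heaE hea3 ε hε1, hmemcol b eb hebE heb3 ε hε2⟩
        rw [hF] at this
        exact this
      · -- cycle avoids s(a,b): bichromatic for c, contradiction
        exact hc.2 ⟨γ, δ, v, p, hcyc, fun e he => by
          rw [← hc'ne e (fun h => hmem (h ▸ he))]; exact hall e he⟩
  refine ⟨part1, ?_⟩
  -- existence of a candidate color
  have hsub : ∀ x : V, colorsAt G c x ⊆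
      ↑((G.neighborFinset x).image fun z => (c s(x, z)).getD 0) := by
    intro x γ ⟨z, hadj, hcz⟩
    simp only [Finset.coe_image, Set.mem_image, Finset.mem_coe, mem_neighborFinset]
    exact ⟨z, hadj, by rw [hcz]; rfl⟩
  set A := ((G.neighborFinset a).image fun z => (c s(a, z)).getD 0) ∪
      ((G.neighborFinset b).image fun z => (c s(b, z)).getD 0) with hA
  have hcard : A.card < (Finset.range (k + 1)).card := by
    rw [Finset.card_range]
    calc A.card ≤ _ + _ := Finset.card_union_le _ _
    _ ≤ G.degree a + G.degree b := by
        gcongr <;> exact (Finset.card_image_le).trans (le_of_eq (card_neighborFinset_eq_degree _ _))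
    _ ≤ k := hdeg
    _ < k + 1 := Nat.lt_succ_self k
  have hns : ¬ Finset.range (k + 1) ⊆ A := fun h =>
    absurd (Finset.card_le_card h) (not_le.mpr hcard)
  obtain ⟨β, hβr, hβA⟩ := Finset.not_subset.mp hns
  have hβlt : β < k + 1 := Finset.mem_range.mp hβr
  have hβnot : β ∉ colorsAt G c a ∪ colorsAt G c b := by
    rintro (h | h)
    · exact hβA (Finset.mem_union_left _ (hsub a h))
    · exact hβA (Finset.mem_union_right _ (hsub b h))
  refine ⟨β, hβlt, hβnot, part1 β hβlt hβnot, ?_⟩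
  intro e he
  by_cases h : e = s(a, b)
  · subst h; simp [Function.update_self]
  · rw [Function.update_of_ne h]; exact htot e he h
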